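/- Let ℓ₁, k₁, k be integers with 0 ≤ ℓ₁ ≤ k₁ < k, and let n = ∏_{j=1}^{k} p_j^{a_j} where the p_j are pairwise distinct primes, the a_j are positive integers, and p_{k₁+1} < p_{k₁+2} < ⋯ < p_k. Let b_{ℓ₁+1}, …, b_{k₁} be positive integers with a_j ≥ b_j for ℓ₁ < j ≤ k₁. Let t_min and t_max be positive real numbers with t_min ≤ σ₋₁(n) ≤ t_max, and set M = t_max / ((∏_{j=1}^{ℓ₁} σ₋₁(p_j^{a_j})) · (∏_{j=ℓ₁+1}^{k₁} σ₋₁(p_j^{b_j}))). If additionally a_{k₁+1} ≥ 2, then (1/(M − 1)) · (8/((2 − M)² + 7)) < p_{k₁+1}. -/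

import Mathlib

open ArithmeticFunction
open scoped ArithmeticFunction.sigma

private lemma sigma_mul_le_aux {m n : ℕ} (hmn : m ∣ n) (hn : 0 < n) :
    σ 1 m * n ≤ σ 1 n * m := by
  obtain ⟨c, rfl⟩ := hmn
  have hm : 0 < m := Nat.pos_of_mul_pos_left (by rwa [mul_comm] at hn)
  have hc : 0 < c := Nat.pos_of_mul_pos_left hn
  rw [sigma_one_apply, sigma_one_apply, Finset.sum_mul, Finset.sum_mul]
  have h1 : ∀ d ∈ m.divisors, d * (m * c) = (d * c) * m := by intro d _; ring
  rw [Finset.sum_congr rfl h1]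
  have h2 : ∑ x ∈ m.divisors, (x * c) * m
      = ∑ e ∈ m.divisors.image (fun d => d * c), e * m := by
    rw [Finset.sum_image (fun x _ y _ h => Nat.eq_of_mul_eq_mul_right hc h)]
  rw [h2]
  apply Finset.sum_le_sum_of_subset
  intro e he
  simp only [Finset.mem_image, Nat.mem_divisors] at he ⊢
  obtain ⟨d, ⟨hd, _⟩, rfl⟩ := he
  exact ⟨mul_dvd_mul hd dvd_rfl, hn.ne'⟩

private lemma abundancy_mono {m n : ℕ} (hmn : m ∣ n) (hn : 0 < n) :
    (σ 1 m : ℝ) / m ≤ (σ 1 n : ℝ) / n := by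
  have hm : 0 < m := Nat.pos_of_dvd_of_pos hmn hn
  rw [div_le_div_iff₀ (by exact_mod_cast hm) (by exact_mod_cast hn)]
  exact_mod_cast sigma_mul_le_aux hmn hn

private lemma abundancy_one_le {m : ℕ} (hm : 0 < m) : 1 ≤ (σ 1 m : ℝ) / m := by
  have := abundancy_mono (one_dvd m) hm
  simpa [sigma_one_apply] using this

private lemma numeric_part {M Q : ℝ} (hQ : 2 ≤ Q) (hM : 1 + 1/Q + 1/Q^2 ≤ M) :
    1 / (M - 1) * (8 / ((2 - M) ^ 2 + 7)) < Q := by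
  have hQpos : (0:ℝ) < Q := by linarith
  have hu : (0:ℝ) < 1/Q := by positivity
  have hu2 : 1/Q ≤ 1/2 := by
    rw [div_le_div_iff₀ (by linarith) (by norm_num)]; linarith
  set u := 1/Q with hudef
  have huQ : u * Q = 1 := by rw [hudef]; field_simp
  have hx : u + u^2 ≤ M - 1 := by
    have h : u^2 = 1/Q^2 := by rw [hudef]; field_simp
    linarith [h ▸ hM]
  have hupos : (0:ℝ) < u + u^2 := by positivity
  have hxpos : (0:ℝ) < M - 1 := by linarith
  set x := M - 1 with hxdef
  have h2M : 2 - M = 1 - x := by rw [hxdef]; ring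
  have step1 : 8 * u < (u + u^2) * ((1 - (u + u^2))^2 + 7) := by
    nlinarith [mul_pos hu hu, mul_pos (mul_pos hu hu) hu,
      mul_nonneg (mul_nonneg hu.le hu.le) (by linarith : (0:ℝ) ≤ 1/2 - u),
      mul_nonneg (mul_nonneg (mul_nonneg hu.le hu.le) hu.le) hu.le,
      mul_nonneg (mul_nonneg (mul_nonneg (mul_nonneg hu.le hu.le) hu.le) hu.le) hu.le]
  have step2 : (u + u^2) * ((1 - (u + u^2))^2 + 7) ≤ x * ((1 - x)^2 + 7) := by
    nlinarith [mul_nonneg (by linarith : (0:ℝ) ≤ x - (u + u^2)) (sq_nonneg (x + (u + u^2) - 2)),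
      mul_nonneg (by linarith : (0:ℝ) ≤ x - (u + u^2)) (sq_nonneg x),
      mul_nonneg (by linarith : (0:ℝ) ≤ x - (u + u^2)) (sq_nonneg (u + u^2))]
  have hkey : 8 < Q * (x * ((1 - x)^2 + 7)) := by
    calc (8:ℝ) = (8 * u) * Q := by rw [mul_assoc, huQ, mul_one]
      _ < (x * ((1 - x)^2 + 7)) * Q := mul_lt_mul_of_pos_right (lt_of_lt_of_le step1 step2) hQpos
      _ = Q * (x * ((1 - x)^2 + 7)) := by ring
  have hden : (0:ℝ) < (1 - x)^2 + 7 := by positivity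
  calc 1 / x * (8 / ((2 - M) ^ 2 + 7)) = 8 / (x * ((1 - x)^2 + 7)) := by
        rw [h2M, div_mul_div_comm, one_mul]
    _ < Q := by
        rw [div_lt_iff₀ (by positivity)]
        nlinarith [hkey]

theorem bounds_on_smallest_unknown_prime_b
    (l1 k1 k : ℕ) (hl1k1 : l1 ≤ k1) (hk1k : k1 < k)
    (p a b : ℕ → ℕ)
    (hp : ∀ j ∈ Finset.Icc 1 k, (p j).Prime)
    (hdist : ∀ i ∈ Finset.Icc 1 k, ∀ j ∈ Finset.Icc 1 k, i ≠ j → p i ≠ p j)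
    (ha : ∀ j ∈ Finset.Icc 1 k, 0 < a j)
    (hsorted : ∀ i j : ℕ, k1 + 1 ≤ i → i < j → j ≤ k → p i < p j)
    (hb : ∀ j : ℕ, l1 < j → j ≤ k1 → 0 < b j ∧ b j ≤ a j)
    (n : ℕ) (hn : n = ∏ j ∈ Finset.Icc 1 k, p j ^ a j)
    (tmin tmax : ℝ) (htmin : 0 < tmin) (htmax : 0 < tmax)
    (hlow : tmin ≤ (σ 1 n : ℝ) / n) (hhigh : (σ 1 n : ℝ) / n ≤ tmax)
    (M : ℝ)
    (hM : M = tmax /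
      ((∏ j ∈ Finset.Icc 1 l1, (σ 1 (p j ^ a j) : ℝ) / (p j ^ a j : ℕ)) *
       (∏ j ∈ Finset.Icc (l1 + 1) k1, (σ 1 (p j ^ b j) : ℝ) / (p j ^ b j : ℕ))))
    (ha2 : 2 ≤ a (k1 + 1)) :
    1 / (M - 1) * (8 / ((2 - M) ^ 2 + 7)) < p (k1 + 1) := by
  have hsub1 : Finset.Icc 1 l1 ⊆ Finset.Icc 1 k := Finset.Icc_subset_Icc_right (by omega)
  have hsub2 : Finset.Icc (l1 + 1) k1 ⊆ Finset.Icc 1 k := Finset.Icc_subset_Icc (by omega) (by omega)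
  have hmemk1 : k1 + 1 ∈ Finset.Icc 1 k := by simp [Finset.mem_Icc]; omega
  have hcop : ∀ i ∈ Finset.Icc 1 k, ∀ j ∈ Finset.Icc 1 k, i ≠ j →
      ∀ e f : ℕ, Nat.Coprime (p i ^ e) (p j ^ f) := fun i hi j hj hij e f =>
    Nat.Coprime.pow e f ((Nat.coprime_primes (hp i hi) (hp j hj)).mpr (hdist i hi j hj hij))
  have hppos : ∀ j ∈ Finset.Icc 1 k, 0 < p j := fun j hj => (hp j hj).pos
  set N1 := ∏ j ∈ Finset.Icc 1 l1, p j ^ a j with hN1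
  set N2 := ∏ j ∈ Finset.Icc (l1 + 1) k1, p j ^ b j with hN2
  set m := N1 * N2 with hmdef
  set q := p (k1 + 1) with hqdef
  set P := q ^ a (k1 + 1) with hPdef
  have hqprime : q.Prime := hp _ hmemk1
  have hq2 : 2 ≤ q := hqprime.two_le
  have hN1pos : 0 < N1 := Finset.prod_pos fun j hj => pow_pos (hppos j (hsub1 hj)) _
  have hN2pos : 0 < N2 := Finset.prod_pos fun j hj => pow_pos (hppos j (hsub2 hj)) _
  have hmpos : 0 < m := Nat.mul_pos hN1pos hN2pos
  have hPpos : 0 < P := pow_pos hqprime.pos _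
  have hnpos : 0 < n := by
    rw [hn]; exact Finset.prod_pos fun j hj => pow_pos (hppos j hj) _
  have hS1 : σ 1 N1 = ∏ j ∈ Finset.Icc 1 l1, σ 1 (p j ^ a j) :=
    isMultiplicative_sigma.map_prod _ _ fun i hi j hj hij =>
      hcop i (hsub1 hi) j (hsub1 hj) hij _ _
  have hS2 : σ 1 N2 = ∏ j ∈ Finset.Icc (l1 + 1) k1, σ 1 (p j ^ b j) :=
    isMultiplicative_sigma.map_prod _ _ fun i hi j hj hij =>
      hcop i (hsub2 hi) j (hsub2 hj) hij _ _
  have hcopN : Nat.Coprime N1 N2 :=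
    Nat.coprime_prod_left_iff.mpr fun i hi => Nat.coprime_prod_right_iff.mpr fun j hj => by
      have hi' := Finset.mem_Icc.mp hi
      have hj' := Finset.mem_Icc.mp hj
      exact hcop i (hsub1 hi) j (hsub2 hj) (by omega) _ _
  have hcopmP : Nat.Coprime m P := by
    refine Nat.Coprime.mul ?_ ?_
    · exact Nat.coprime_prod_left_iff.mpr fun i hi => by
        have hi' := Finset.mem_Icc.mp hi
        exact hcop i (hsub1 hi) (k1 + 1) hmemk1 (by omega) _ _
    · exact Nat.coprime_prod_left_iff.mpr fun i hi => by
        have hi' := Finset.mem_Icc.mp hi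
        exact hcop i (hsub2 hi) (k1 + 1) hmemk1 (by omega) _ _
  have hσm : σ 1 m = σ 1 N1 * σ 1 N2 := isMultiplicative_sigma.map_mul_of_coprime hcopN
  have hσmP : σ 1 (m * P) = σ 1 m * σ 1 P := isMultiplicative_sigma.map_mul_of_coprime hcopmP
  have hD : (∏ j ∈ Finset.Icc 1 l1, (σ 1 (p j ^ a j) : ℝ) / (p j ^ a j : ℕ)) *
       (∏ j ∈ Finset.Icc (l1 + 1) k1, (σ 1 (p j ^ b j) : ℝ) / (p j ^ b j : ℕ))
       = (σ 1 m : ℝ) / m := by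
    rw [Finset.prod_div_distrib, Finset.prod_div_distrib, div_mul_div_comm,
      ← Nat.cast_prod, ← Nat.cast_prod, ← Nat.cast_prod, ← Nat.cast_prod,
      ← hS1, ← hS2, ← Nat.cast_mul, ← Nat.cast_mul, ← hσm, ← hN1, ← hN2, ← hmdef]
  have hIoc : ∀ x y : ℕ, Finset.Icc (x + 1) y = Finset.Ioc x y := fun x y => Finset.Icc_add_one_left_eq_Ioc x y
  have hdvd : m * P ∣ n := by
    have hsplit : ∏ j ∈ Finset.Icc 1 k1, p j ^ a j
        = (∏ j ∈ Finset.Icc 1 l1, p j ^ a j) * ∏ j ∈ Finset.Icc (l1 + 1) k1, p j ^ a j := by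
      rw [hIoc 0 k1, hIoc 0 l1, hIoc l1 k1]
      exact (Finset.prod_Ioc_consecutive _ (Nat.zero_le l1) hl1k1).symm
    have h3 : m * P ∣ ∏ j ∈ Finset.Icc 1 (k1 + 1), p j ^ a j := by
      rw [Finset.prod_Icc_succ_top (by omega : 1 ≤ k1 + 1), hsplit]
      refine mul_dvd_mul (mul_dvd_mul dvd_rfl ?_) dvd_rfl
      exact Finset.prod_dvd_prod_of_dvd _ _ fun j hj => by
        have hj' := Finset.mem_Icc.mp hj
        exact pow_dvd_pow _ (hb j (by omega) (by omega)).2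
    refine h3.trans ?_
    rw [hn]
    exact Finset.prod_dvd_prod_of_subset _ _ _ (Finset.Icc_subset_Icc_right (by omega))
  have hmono1 := abundancy_mono hdvd hnpos
  have hmono2 := abundancy_mono (pow_dvd_pow q ha2) hPpos
  have hσq2 : σ 1 (q ^ 2) = 1 + q + q ^ 2 := by
    rw [sigma_one_apply_prime_pow hqprime]
    simp [Finset.sum_range_succ]
  have hDpos : (0:ℝ) < (σ 1 m : ℝ) / m := lt_of_lt_of_le one_pos (abundancy_one_le hmpos)
  have hsplitmP : (σ 1 (m * P) : ℝ) / ((m : ℝ) * (P : ℝ))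
      = ((σ 1 m : ℝ) / m) * ((σ 1 P : ℝ) / P) := by
    rw [hσmP]; push_cast; rw [div_mul_div_comm]
  have hMge : (σ 1 P : ℝ) / P ≤ M := by
    rw [hM, hD, le_div_iff₀ hDpos]
    calc (σ 1 P : ℝ) / P * ((σ 1 m : ℝ) / m)
        = (σ 1 (m * P) : ℝ) / ((m : ℝ) * (P : ℝ)) := by rw [hsplitmP]; ring
      _ ≤ (σ 1 n : ℝ) / n := by exact_mod_cast hmono1
      _ ≤ tmax := hhigh
  have hQ2 : (2:ℝ) ≤ (q : ℝ) := by exact_mod_cast hq2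
  have hQ0 : (q:ℝ) ≠ 0 := by positivity
  have habq2 : 1 + 1/(q:ℝ) + 1/(q:ℝ)^2 ≤ (σ 1 (q ^ 2) : ℝ) / ((q ^ 2 : ℕ) : ℝ) := by
    rw [hσq2]
    push_cast
    have he : ((1:ℝ) + q + (q:ℝ)^2) / (q:ℝ)^2 = 1 + 1/(q:ℝ) + 1/(q:ℝ)^2 := by
      field_simp; ring
    rw [he]
  have hMlow : 1 + 1/(q:ℝ) + 1/(q:ℝ)^2 ≤ M := by
    refine le_trans habq2 (le_trans ?_ hMge)
    exact_mod_cast hmono2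
  exact numeric_part hQ2 hMlow
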